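/- Let m ≥ 1, A, B ∈ ℝ^{m×m} and C ∈ ℂ^{m×m} with λ⁻(A) > 0, λ⁻(C) > 0 and |B − Bᵀ|² < 16 λ⁻(A) λ⁻(C). Then for every ω ∈ ℝ the matrix −ω² A + iω B − C ∈ ℂ^{m×m} is invertible. -/

import Mathlib

open Matrix

/-- The lower spectral bound `λ⁻(A) = min { Re (xᴴ A x) : |x| = 1 }` of a complex matrix,
where `|x|` is the Euclidean norm. -/
noncomputable def lowerSpectralBound {m : ℕ} (A : Matrix (Fin m) (Fin m) ℂ) : ℝ :=
  sInf { r : ℝ | ∃ x : Fin m → ℂ,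
    (∑ i, Complex.normSq (x i)) = 1 ∧ r = (dotProduct (star x) (A.mulVec x)).re }

/-- The operator (spectral) norm of a real matrix with respect to the Euclidean norm. -/
noncomputable def euclideanOpNorm {m : ℕ} (B : Matrix (Fin m) (Fin m) ℝ) : ℝ :=
  sSup { r : ℝ | ∃ x : Fin m → ℝ,
    (∑ i, (x i) ^ 2) = 1 ∧ r = Real.sqrt (∑ i, (B.mulVec x i) ^ 2) }

namespace Stmt8Aux
variable {m : ℕ}

lemma abs_le_one_of_unit {x : Fin m → ℂ} (hx : (∑ i, Complex.normSq (x i)) = 1) (i : Fin m) :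
    ‖x i‖ ≤ 1 := by
  have h1 : Complex.normSq (x i) ≤ 1 := by
    calc Complex.normSq (x i) ≤ ∑ j, Complex.normSq (x j) :=
          Finset.single_le_sum (fun j _ => Complex.normSq_nonneg _) (Finset.mem_univ i)
      _ = 1 := hx
  have h2 : ‖x i‖ ^ 2 ≤ 1 := by rwa [Complex.sq_norm]
  nlinarith [norm_nonneg (x i)]

lemma quad_re_bound (A : Matrix (Fin m) (Fin m) ℂ) {x : Fin m → ℂ}
    (hx : (∑ i, Complex.normSq (x i)) = 1) :
    -(∑ i, ∑ j, ‖A i j‖) ≤ (dotProduct (star x) (A.mulVec x)).re := by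
  have habs : ‖dotProduct (star x) (A.mulVec x)‖
      ≤ ∑ i, ∑ j, ‖A i j‖ := by
    rw [dotProduct]
    refine le_trans (norm_sum_le _ _) (Finset.sum_le_sum fun i _ => ?_)
    rw [Pi.star_apply, Matrix.mulVec, dotProduct, Finset.mul_sum]
    refine le_trans (norm_sum_le _ _) (Finset.sum_le_sum fun j _ => ?_)
    rw [norm_mul, norm_mul]
    have hs : ‖star (x i)‖ = ‖x i‖ := norm_star (x i)
    rw [hs]
    calc ‖x i‖ * (‖A i j‖ * ‖x j‖)
        ≤ 1 * (‖A i j‖ * 1) := by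
          have h1 := abs_le_one_of_unit hx i
          have h2 := abs_le_one_of_unit hx j
          gcongr
      _ = ‖A i j‖ := by ring
  have h1 := Complex.abs_re_le_norm (dotProduct (star x) (A.mulVec x))
  have h2 := neg_abs_le (dotProduct (star x) (A.mulVec x)).re
  linarith

lemma lsb_le (A : Matrix (Fin m) (Fin m) ℂ) {x : Fin m → ℂ}
    (hx : (∑ i, Complex.normSq (x i)) = 1) :
    lowerSpectralBound A ≤ (dotProduct (star x) (A.mulVec x)).re := by
  refine csInf_le ⟨-(∑ i, ∑ j, ‖A i j‖), ?_⟩ ⟨x, hx, rfl⟩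
  rintro r ⟨y, hy, rfl⟩
  exact quad_re_bound A hy


lemma real_abs_le_one {x : Fin m → ℝ} (hx : (∑ i, (x i) ^ 2) = 1) (i : Fin m) : |x i| ≤ 1 := by
  have h1 : x i ^ 2 ≤ 1 := by
    calc x i ^ 2 ≤ ∑ j, x j ^ 2 :=
          Finset.single_le_sum (fun j _ => sq_nonneg (x j)) (Finset.mem_univ i)
      _ = 1 := hx
  nlinarith [abs_nonneg (x i), sq_abs (x i)]

lemma op_elt_bound (B : Matrix (Fin m) (Fin m) ℝ) {x : Fin m → ℝ}
    (hx : (∑ i, (x i) ^ 2) = 1) :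
    Real.sqrt (∑ i, (B.mulVec x i) ^ 2) ≤ Real.sqrt (∑ i, (∑ j, |B i j|) ^ 2) := by
  apply Real.sqrt_le_sqrt
  refine Finset.sum_le_sum fun i _ => ?_
  have h1 : |B.mulVec x i| ≤ ∑ j, |B i j| := by
    rw [Matrix.mulVec, dotProduct]
    refine le_trans (Finset.abs_sum_le_sum_abs _ _) (Finset.sum_le_sum fun j _ => ?_)
    rw [abs_mul]
    calc |B i j| * |x j| ≤ |B i j| * 1 := by
          have := real_abs_le_one hx j
          gcongr
      _ = |B i j| := by ring
  calc (B.mulVec x i) ^ 2 = |B.mulVec x i| ^ 2 := (sq_abs _).symm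
    _ ≤ (∑ j, |B i j|) ^ 2 := by
        have h0 : (0:ℝ) ≤ |B.mulVec x i| := abs_nonneg _
        exact pow_le_pow_left₀ h0 h1 2

lemma op_bddAbove (B : Matrix (Fin m) (Fin m) ℝ) :
    BddAbove { r : ℝ | ∃ x : Fin m → ℝ,
      (∑ i, (x i) ^ 2) = 1 ∧ r = Real.sqrt (∑ i, (B.mulVec x i) ^ 2) } := by
  refine ⟨Real.sqrt (∑ i, (∑ j, |B i j|) ^ 2), ?_⟩
  rintro r ⟨x, hx, rfl⟩
  exact op_elt_bound B hx

lemma le_opNorm (B : Matrix (Fin m) (Fin m) ℝ) {x : Fin m → ℝ}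
    (hx : (∑ i, (x i) ^ 2) = 1) :
    Real.sqrt (∑ i, (B.mulVec x i) ^ 2) ≤ euclideanOpNorm B :=
  le_csSup (op_bddAbove B) ⟨x, hx, rfl⟩

lemma opNorm_nonneg (hm : 1 ≤ m) (B : Matrix (Fin m) (Fin m) ℝ) :
    0 ≤ euclideanOpNorm B := by
  have i0 : Fin m := ⟨0, hm⟩
  have hx : (∑ i, ((Pi.single i0 1 : Fin m → ℝ) i) ^ 2) = 1 := by
    rw [Finset.sum_eq_single i0]
    · simp
    · intro j _ hj; simp [Pi.single_apply, hj]
    · simp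
  exact le_trans (Real.sqrt_nonneg _) (le_opNorm B hx)

lemma mulVec_sq_le (hm : 1 ≤ m) (B : Matrix (Fin m) (Fin m) ℝ) (v : Fin m → ℝ) :
    (∑ i, (B.mulVec v i) ^ 2) ≤ euclideanOpNorm B ^ 2 * ∑ i, (v i) ^ 2 := by
  by_cases hv : (∑ i, (v i) ^ 2) = 0
  · have hvz : ∀ i, v i = 0 := by
      intro i
      have := (Finset.sum_eq_zero_iff_of_nonneg (fun j _ => sq_nonneg (v j))).1 hv i
        (Finset.mem_univ i)
      exact pow_eq_zero_iff two_ne_zero |>.1 this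
    have : ∀ i, B.mulVec v i = 0 := by
      intro i
      rw [Matrix.mulVec, dotProduct]
      exact Finset.sum_eq_zero fun j _ => by rw [hvz j, mul_zero]
    simp only [this]
    have hnn : (0:ℝ) ≤ euclideanOpNorm B ^ 2 * ∑ i, (v i) ^ 2 :=
      mul_nonneg (sq_nonneg _) (Finset.sum_nonneg fun i _ => sq_nonneg _)
    simpa using hnn
  · have hs : 0 < ∑ i, (v i) ^ 2 :=
      lt_of_le_of_ne (Finset.sum_nonneg fun i _ => sq_nonneg _) (Ne.symm hv)
    set s := ∑ i, (v i) ^ 2 with hsdef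
    set c := Real.sqrt s with hcdef
    have hc : 0 < c := Real.sqrt_pos.2 hs
    have hc2 : c ^ 2 = s := Real.sq_sqrt hs.le
    have hw : (∑ i, ((c⁻¹ • v) i) ^ 2) = 1 := by
      simp only [Pi.smul_apply, smul_eq_mul, mul_pow, ← Finset.mul_sum]
      rw [← hsdef, ← hc2]
      field_simp
    have hmem := le_opNorm B hw
    have hmv : B.mulVec (c⁻¹ • v) = c⁻¹ • B.mulVec v := Matrix.mulVec_smul B c⁻¹ v
    have heq : (∑ i, (B.mulVec (c⁻¹ • v) i) ^ 2) = c⁻¹ ^ 2 * ∑ i, (B.mulVec v i) ^ 2 := by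
      rw [hmv]
      simp only [Pi.smul_apply, smul_eq_mul, mul_pow, ← Finset.mul_sum]
    rw [heq] at hmem
    have hnn : (0:ℝ) ≤ ∑ i, (B.mulVec v i) ^ 2 := Finset.sum_nonneg fun i _ => sq_nonneg _
    have hsq : Real.sqrt (c⁻¹ ^ 2 * ∑ i, (B.mulVec v i) ^ 2)
        = c⁻¹ * Real.sqrt (∑ i, (B.mulVec v i) ^ 2) := by
      rw [Real.sqrt_mul (sq_nonneg _), Real.sqrt_sq (inv_nonneg.2 hc.le)]
    rw [hsq] at hmem
    have h2 : Real.sqrt (∑ i, (B.mulVec v i) ^ 2) ≤ euclideanOpNorm B * c := by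
      rw [inv_mul_le_iff₀ hc] at hmem
      linarith [hmem]
    have h3 := Real.sq_sqrt hnn
    have h4 : Real.sqrt (∑ i, (B.mulVec v i) ^ 2) ^ 2 ≤ (euclideanOpNorm B * c) ^ 2 :=
      pow_le_pow_left₀ (Real.sqrt_nonneg _) h2 2
    rw [h3, mul_pow, hc2] at h4
    exact h4


lemma im_quad (B : Matrix (Fin m) (Fin m) ℝ) (x : Fin m → ℂ) :
    (dotProduct (star x) ((B.map Complex.ofReal).mulVec x)).im
      = dotProduct (fun i => (x i).re) ((B - B.transpose).mulVec fun k => (x k).im) := by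
  have hL : (dotProduct (star x) ((B.map Complex.ofReal).mulVec x)).im
      = (∑ i, ∑ j, B i j * ((x i).re * (x j).im))
        - ∑ i, ∑ j, B i j * ((x i).im * (x j).re) := by
    rw [dotProduct, Complex.im_sum, ← Finset.sum_sub_distrib]
    refine Finset.sum_congr rfl fun i _ => ?_
    rw [Matrix.mulVec, dotProduct, Pi.star_apply, Finset.mul_sum, Complex.im_sum,
      ← Finset.sum_sub_distrib]
    refine Finset.sum_congr rfl fun j _ => ?_
    simp only [Matrix.map_apply, Complex.mul_im, Complex.mul_re, Complex.star_def,
      Complex.conj_re, Complex.conj_im, Complex.ofReal_re, Complex.ofReal_im]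
    ring
  have hR : dotProduct (fun i => (x i).re) ((B - B.transpose).mulVec fun k => (x k).im)
      = (∑ i, ∑ j, B i j * ((x i).re * (x j).im))
        - ∑ i, ∑ j, B j i * ((x i).re * (x j).im) := by
    rw [dotProduct, ← Finset.sum_sub_distrib]
    refine Finset.sum_congr rfl fun i _ => ?_
    rw [Matrix.mulVec, dotProduct, Finset.mul_sum, ← Finset.sum_sub_distrib]
    refine Finset.sum_congr rfl fun j _ => ?_
    simp only [Matrix.sub_apply, Matrix.transpose_apply]
    ring
  rw [hL, hR]
  congr 1
  rw [Finset.sum_comm]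
  exact Finset.sum_congr rfl fun a _ => Finset.sum_congr rfl fun b _ => by ring

lemma arith {lA lC β rA rC ib : ℝ} {ω : ℝ} (hA : 0 < lA) (hC : 0 < lC)
    (hB : β ^ 2 < 16 * lA * lC) (hzA : lA ≤ rA) (hzC : lC ≤ rC)
    (himsq : ib ^ 2 ≤ β ^ 2 / 4) : -(ω ^ 2) * rA - ω * ib - rC < 0 := by
  have hrA : 0 < rA := hA.trans_le hzA
  have hrC : 0 < rC := hC.trans_le hzC
  rcases eq_or_ne ω 0 with h0 | h0
  · rw [h0]; simp; linarith
  · have hω2 : 0 < ω ^ 2 := by positivity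
    have h1 : (ω * ib) ^ 2 ≤ ω ^ 2 * (β ^ 2 / 4) := by nlinarith
    have h2 : ω ^ 2 * (β ^ 2 / 4) < 4 * ω ^ 2 * (lA * lC) := by nlinarith
    have h3 : 4 * ω ^ 2 * (lA * lC) ≤ 4 * ω ^ 2 * (rA * rC) := by
      have h := mul_le_mul hzA hzC hC.le hrA.le
      nlinarith
    have hP : 0 < ω ^ 2 * rA + rC := by positivity
    have h4 : (ω * ib) ^ 2 < (ω ^ 2 * rA + rC) ^ 2 := by
      nlinarith [sq_nonneg (ω ^ 2 * rA - rC)]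
    have h5 : |ω * ib| < ω ^ 2 * rA + rC := by
      nlinarith [abs_nonneg (ω * ib), sq_abs (ω * ib)]
    have h6 := neg_abs_le (ω * ib)
    linarith

lemma key (hm : 1 ≤ m) (A B : Matrix (Fin m) (Fin m) ℝ) (C : Matrix (Fin m) (Fin m) ℂ)
    (hA : 0 < lowerSpectralBound (A.map Complex.ofReal))
    (hC : 0 < lowerSpectralBound C)
    (hB : euclideanOpNorm (B - B.transpose) ^ 2 <
      16 * lowerSpectralBound (A.map Complex.ofReal) * lowerSpectralBound C)
    (ω : ℝ) {x : Fin m → ℂ} (hx : (∑ i, Complex.normSq (x i)) = 1) :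
    (dotProduct (star x)
      (((-(ω:ℂ) ^ 2) • (A.map Complex.ofReal) + ((ω:ℂ) * Complex.I) • (B.map Complex.ofReal)
        - C).mulVec x)).re < 0 := by
  set lA := lowerSpectralBound (A.map Complex.ofReal) with hlA
  set lC := lowerSpectralBound C with hlC
  set β := euclideanOpNorm (B - B.transpose) with hβ
  set zA := dotProduct (star x) ((A.map Complex.ofReal).mulVec x) with hzAdef
  set zB := dotProduct (star x) ((B.map Complex.ofReal).mulVec x) with hzBdef
  set zC := dotProduct (star x) (C.mulVec x) with hzCdef
  have hdecomp : dotProduct (star x)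
      (((-(ω:ℂ) ^ 2) • (A.map Complex.ofReal) + ((ω:ℂ) * Complex.I) • (B.map Complex.ofReal)
        - C).mulVec x)
      = (-(ω:ℂ) ^ 2) * zA + ((ω:ℂ) * Complex.I) * zB - zC := by
    rw [Matrix.sub_mulVec, Matrix.add_mulVec, Matrix.smul_mulVec, Matrix.smul_mulVec,
      dotProduct_sub, dotProduct_add, dotProduct_smul,
      dotProduct_smul]
    simp [smul_eq_mul, hzAdef, hzBdef, hzCdef]
  rw [hdecomp]
  have hre : ((-(ω:ℂ) ^ 2) * zA + ((ω:ℂ) * Complex.I) * zB - zC).re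
      = -(ω ^ 2) * zA.re - ω * zB.im - zC.re := by
    simp only [Complex.add_re, Complex.sub_re, Complex.mul_re, Complex.mul_im, Complex.neg_re,
      Complex.neg_im, Complex.I_re, Complex.I_im, Complex.ofReal_re, Complex.ofReal_im,
      ← Complex.ofReal_pow]
    ring
  rw [hre]
  have hzA : lA ≤ zA.re := lsb_le _ hx
  have hzC : lC ≤ zC.re := lsb_le _ hx
  have hβ0 : 0 ≤ β := opNorm_nonneg hm _
  set u : Fin m → ℝ := fun i => (x i).re with hu
  set v : Fin m → ℝ := fun i => (x i).im with hv
  have huv : (∑ i, u i ^ 2) + (∑ i, v i ^ 2) = 1 := by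
    rw [← Finset.sum_add_distrib, ← hx]
    refine Finset.sum_congr rfl fun i _ => ?_
    simp only [hu, hv, Complex.normSq_apply]
    ring
  have hzB : zB.im = dotProduct u ((B - B.transpose).mulVec v) := im_quad B x
  have hunn : (0:ℝ) ≤ ∑ i, u i ^ 2 := Finset.sum_nonneg fun i _ => sq_nonneg _
  have hvnn : (0:ℝ) ≤ ∑ i, v i ^ 2 := Finset.sum_nonneg fun i _ => sq_nonneg _
  have hcs : (dotProduct u ((B - B.transpose).mulVec v)) ^ 2
      ≤ β ^ 2 * ((∑ i, u i ^ 2) * (∑ i, v i ^ 2)) := by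
    have h1 := Finset.sum_mul_sq_le_sq_mul_sq Finset.univ u ((B - B.transpose).mulVec v)
    have h2 := mulVec_sq_le hm (B - B.transpose) v
    rw [dotProduct]
    calc (∑ i, u i * (B - B.transpose).mulVec v i) ^ 2
        ≤ (∑ i, u i ^ 2) * ∑ i, ((B - B.transpose).mulVec v i) ^ 2 := h1
      _ ≤ (∑ i, u i ^ 2) * (β ^ 2 * ∑ i, v i ^ 2) := by
          exact mul_le_mul_of_nonneg_left h2 hunn
      _ = β ^ 2 * ((∑ i, u i ^ 2) * (∑ i, v i ^ 2)) := by ring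
  have himsq : zB.im ^ 2 ≤ β ^ 2 / 4 := by
    have hq : (∑ i, u i ^ 2) * (∑ i, v i ^ 2) ≤ 1 / 4 := by
      nlinarith [sq_nonneg ((∑ i, u i ^ 2) - (∑ i, v i ^ 2))]
    have hq2 : β ^ 2 * ((∑ i, u i ^ 2) * (∑ i, v i ^ 2)) ≤ β ^ 2 * (1 / 4) :=
      mul_le_mul_of_nonneg_left hq (sq_nonneg β)
    rw [hzB]
    linarith
  exact arith hA hC hB hzA hzC himsq

end Stmt8Aux

/-- Under the hypotheses of Lemma B.1 (i), the matrix `−ω² A + iω B − C` is invertible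
for every `ω ∈ ℝ`. -/
theorem stmt_8 (m : ℕ) (hm : 1 ≤ m) (A B : Matrix (Fin m) (Fin m) ℝ)
    (C : Matrix (Fin m) (Fin m) ℂ)
    (hA : 0 < lowerSpectralBound (A.map Complex.ofReal))
    (hC : 0 < lowerSpectralBound C)
    (hB : euclideanOpNorm (B - B.transpose) ^ 2 <
      16 * lowerSpectralBound (A.map Complex.ofReal) * lowerSpectralBound C) :
    ∀ ω : ℝ, IsUnit
      ((-(ω:ℂ) ^ 2) • (A.map Complex.ofReal) +
        ((ω:ℂ) * Complex.I) • (B.map Complex.ofReal) - C) := by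
  intro ω
  set M := (-(ω:ℂ) ^ 2) • (A.map Complex.ofReal) +
      ((ω:ℂ) * Complex.I) • (B.map Complex.ofReal) - C with hM
  rw [Matrix.isUnit_iff_isUnit_det, isUnit_iff_ne_zero]
  intro hdet
  obtain ⟨x, hx0, hxM⟩ := Matrix.exists_mulVec_eq_zero_iff.2 hdet
  have hs : 0 < ∑ i, Complex.normSq (x i) := by
    by_contra h
    push_neg at h
    have hz : ∑ i, Complex.normSq (x i) = 0 :=
      le_antisymm h (Finset.sum_nonneg fun i _ => Complex.normSq_nonneg _)
    have hall : ∀ i, x i = 0 := fun i => Complex.normSq_eq_zero.1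
      ((Finset.sum_eq_zero_iff_of_nonneg (fun j _ => Complex.normSq_nonneg _)).1 hz i
        (Finset.mem_univ i))
    exact hx0 (funext hall)
  set c := Real.sqrt (∑ i, Complex.normSq (x i)) with hc
  have hcpos : 0 < c := Real.sqrt_pos.2 hs
  set y : Fin m → ℂ := ((c⁻¹ : ℝ) : ℂ) • x with hy
  have hynorm : ∑ i, Complex.normSq (y i) = 1 := by
    have hc2 : c ^ 2 = ∑ i, Complex.normSq (x i) := Real.sq_sqrt hs.le
    simp only [hy, Pi.smul_apply, smul_eq_mul, Complex.normSq_mul, Complex.normSq_ofReal,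
      ← Finset.mul_sum]
    rw [← hc2]
    field_simp
  have hMy : M.mulVec y = 0 := by rw [hy, Matrix.mulVec_smul, hxM, smul_zero]
  have hdot : dotProduct (star y) (M.mulVec y) = 0 := by
    rw [hMy, dotProduct_zero]
  have hkey := Stmt8Aux.key hm A B C hA hC hB ω hynorm
  rw [← hM, hdot] at hkey
  simp at hkey
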